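/- If u : ℝ^d → ℝ is a polynomial function of total degree at most 3, then the nonlocal Laplacian agrees exactly with the classical Laplacian: ℒ_δ u(x) = Δu(x) for every x ∈ ℝ^d. (This is the exactness property underlying the paper's consistency tests with linear and cubic data.) -/

import Mathlib

open MeasureTheory

namespace NonlocalAux

variable {d : ℕ}

/-- Coordinate evaluation on Euclidean space is continuous. -/
lemma cont_coord (i : Fin d) : Continuous fun h : EuclideanSpace ℝ (Fin d) => h i :=
  (continuous_apply i).comp (PiLp.continuousLinearEquiv 2 ℝ (fun _ : Fin d => ℝ)).continuous

/-- A continuous function times the compactly supported kernel is integrable. -/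
lemma integrable_mul_gamma {δ : ℝ} {γ : ℝ → ℝ} (hγ_meas : Measurable γ)
    (hγ_nonneg : ∀ r, 0 ≤ γ r) (hγ_supp : ∀ r, δ ≤ r → γ r = 0)
    (hγ_int : Integrable fun h : EuclideanSpace ℝ (Fin d) => γ ‖h‖)
    {g : EuclideanSpace ℝ (Fin d) → ℝ} (hg : Continuous g) :
    Integrable fun h : EuclideanSpace ℝ (Fin d) => g h * γ ‖h‖ := by
  obtain ⟨C, hC⟩ :=
    (isCompact_closedBall (0 : EuclideanSpace ℝ (Fin d)) δ).exists_bound_of_continuousOn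
      hg.continuousOn
  refine (hγ_int.const_mul (max C 0)).mono'
    (hg.aestronglyMeasurable.mul (hγ_meas.comp measurable_norm).aestronglyMeasurable)
    (Filter.Eventually.of_forall fun h => ?_)
  by_cases hh : ‖h‖ < δ
  · have h1 : ‖g h‖ ≤ max C 0 :=
      le_trans (hC h (by simpa [Metric.mem_closedBall, dist_zero_right] using hh.le))
        (le_max_left _ _)
    have h2 : 0 ≤ γ ‖h‖ := hγ_nonneg _
    calc ‖g h * γ ‖h‖‖ = ‖g h‖ * γ ‖h‖ := by rw [norm_mul, Real.norm_of_nonneg h2]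
    _ ≤ max C 0 * γ ‖h‖ := mul_le_mul_of_nonneg_right h1 h2
  · simp [hγ_supp _ (not_lt.1 hh)]

/-- Transfer of integrals along a linear isometry. -/
lemma integral_comp_isometry (e : EuclideanSpace ℝ (Fin d) ≃ₗᵢ[ℝ] EuclideanSpace ℝ (Fin d))
    (g : EuclideanSpace ℝ (Fin d) → ℝ) :
    ∫ h : EuclideanSpace ℝ (Fin d), g (e h) = ∫ h : EuclideanSpace ℝ (Fin d), g h :=
  e.measurePreserving.integral_comp e.toHomeomorph.measurableEmbedding g

lemma norm_sq_eq (h : EuclideanSpace ℝ (Fin d)) : ‖h‖ ^ 2 = ∑ k, (h k) ^ 2 := by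
  rw [EuclideanSpace.norm_eq, Real.sq_sqrt (by positivity)]
  simp [Real.norm_eq_abs, sq_abs]

/-- The second moments of the kernel. -/
lemma moment (hd : 1 ≤ d) {δ : ℝ} {γ : ℝ → ℝ} (hγ_meas : Measurable γ)
    (hγ_nonneg : ∀ r, 0 ≤ γ r) (hγ_supp : ∀ r, δ ≤ r → γ r = 0)
    (hγ_int : Integrable fun h : EuclideanSpace ℝ (Fin d) => γ ‖h‖)
    (hγ_norm : (∫ h : EuclideanSpace ℝ (Fin d), γ ‖h‖ * ‖h‖ ^ 2) = (d : ℝ)) (i j : Fin d) :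
    (∫ h : EuclideanSpace ℝ (Fin d), (h i * h j) * γ ‖h‖) = if i = j then 1 else 0 := by
  by_cases hij : i = j
  · subst hij
    rw [if_pos rfl]
    have i0 : Fin d := ⟨0, hd⟩
    -- all diagonal moments agree
    have hswap : ∀ k : Fin d,
        (∫ h : EuclideanSpace ℝ (Fin d), (h k * h k) * γ ‖h‖)
          = ∫ h : EuclideanSpace ℝ (Fin d), (h (⟨0, hd⟩ : Fin d) * h ⟨0, hd⟩) * γ ‖h‖ := by
      intro k
      set σ : Fin d ≃ Fin d := Equiv.swap k ⟨0, hd⟩ with hσ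
      set e := LinearIsometryEquiv.piLpCongrLeft 2 ℝ ℝ σ with he
      have happ : ∀ h : EuclideanSpace ℝ (Fin d), e h k = h ⟨0, hd⟩ := by
        intro h
        have : e h k = h (σ.symm k) := rfl
        rw [this]
        simp [hσ]
      have htrans := integral_comp_isometry e (fun y => (y k * y k) * γ ‖y‖)
      calc (∫ h : EuclideanSpace ℝ (Fin d), (h k * h k) * γ ‖h‖)
          = ∫ h : EuclideanSpace ℝ (Fin d), ((e h) k * (e h) k) * γ ‖e h‖ := htrans.symm
        _ = ∫ h : EuclideanSpace ℝ (Fin d), (h ⟨0, hd⟩ * h ⟨0, hd⟩) * γ ‖h‖ := by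
            congr 1; funext h; rw [e.norm_map, happ]
    -- sum of diagonal moments is d
    have hsum : ∑ k : Fin d, (∫ h : EuclideanSpace ℝ (Fin d), (h k * h k) * γ ‖h‖) = (d : ℝ) := by
      rw [← integral_finset_sum]
      · rw [← hγ_norm]
        congr 1; funext h
        rw [norm_sq_eq h, Finset.mul_sum, Finset.sum_congr rfl]
        intro k _
        ring
      · intro k _
        exact integrable_mul_gamma hγ_meas hγ_nonneg hγ_supp hγ_int
          (((cont_coord k).mul (cont_coord k)))
    set m0 : ℝ := ∫ h : EuclideanSpace ℝ (Fin d), (h (⟨0, hd⟩ : Fin d) * h ⟨0, hd⟩) * γ ‖h‖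
      with hm0
    have hsum' : (d : ℝ) * m0 = (d : ℝ) := by
      calc (d : ℝ) * m0 = ∑ _k : Fin d, m0 := by
            rw [Finset.sum_const, Finset.card_univ, Fintype.card_fin, nsmul_eq_mul]
        _ = ∑ k : Fin d, ∫ h : EuclideanSpace ℝ (Fin d), (h k * h k) * γ ‖h‖ :=
            Finset.sum_congr rfl fun k _ => (hswap k).symm
        _ = (d : ℝ) := hsum
    have hdne : (d : ℝ) ≠ 0 := Nat.cast_ne_zero.mpr (by omega)
    rw [hswap i]
    refine mul_left_cancel₀ hdne ?_
    rw [mul_one]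
    exact hsum'
  · rw [if_neg hij]
    set e := LinearIsometryEquiv.piLpCongrRight (𝕜 := ℝ) 2
      (fun k : Fin d => if k = i then LinearIsometryEquiv.neg ℝ else LinearIsometryEquiv.refl ℝ ℝ)
      with he
    have happ : ∀ (h : EuclideanSpace ℝ (Fin d)) (k : Fin d),
        e h k = if k = i then -(h k) else h k := by
      intro h k
      have : e h k = (if k = i then LinearIsometryEquiv.neg ℝ else LinearIsometryEquiv.refl ℝ ℝ) (h k) := rfl
      rw [this]
      by_cases hk : k = i <;> simp [hk]
    have htrans := integral_comp_isometry e (fun y => (y i * y j) * γ ‖y‖)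
    have hneg : (∫ h : EuclideanSpace ℝ (Fin d), ((e h) i * (e h) j) * γ ‖e h‖)
        = ∫ h : EuclideanSpace ℝ (Fin d), -((h i * h j) * γ ‖h‖) := by
      congr 1; funext h
      rw [e.norm_map, happ, happ, if_pos rfl, if_neg (Ne.symm hij)]
      ring
    have : (∫ h : EuclideanSpace ℝ (Fin d), (h i * h j) * γ ‖h‖)
        = -∫ h : EuclideanSpace ℝ (Fin d), (h i * h j) * γ ‖h‖ := by
      conv_lhs => rw [← htrans, hneg, integral_neg]
    linarith

end NonlocalAux

open NonlocalAux

/-- Exactness of the nonlocal Laplacian on polynomials of total degree at most 3: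
the nonlocal Laplacian agrees with the classical Laplacian (trace of the Hessian). -/
theorem nonlocal_laplacian_exact_on_cubics
    (d : ℕ) (hd : 1 ≤ d) (δ : ℝ) (hδ : 0 < δ)
    (γ : ℝ → ℝ) (hγ_meas : Measurable γ) (hγ_nonneg : ∀ r, 0 ≤ γ r)
    (hγ_supp : ∀ r, δ ≤ r → γ r = 0)
    (hγ_int : Integrable (fun h : EuclideanSpace ℝ (Fin d) => γ ‖h‖))
    (hγ_norm : (∫ h : EuclideanSpace ℝ (Fin d), γ ‖h‖ * ‖h‖ ^ 2) = (d : ℝ))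
    (u : EuclideanSpace ℝ (Fin d) → ℝ)
    (p : MvPolynomial (Fin d) ℝ) (hp : p.totalDegree ≤ 3)
    (hup : ∀ x : EuclideanSpace ℝ (Fin d), u x = MvPolynomial.eval (fun i => x i) p)
    (x : EuclideanSpace ℝ (Fin d)) :
    2 * ∫ y, (u y - u x) * γ ‖y - x‖ =
      ∑ i : Fin d, iteratedFDeriv ℝ 2 u x
        ![EuclideanSpace.single i 1, EuclideanSpace.single i 1] := by
  have hu : u = fun z : EuclideanSpace ℝ (Fin d) => MvPolynomial.eval (fun i => z i) p :=
    funext hup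
  subst hu
  set f : EuclideanSpace ℝ (Fin d) → ℝ :=
    fun z => MvPolynomial.eval (fun i => z i) p with hf
  -- smoothness
  have hsmooth : ContDiff ℝ 2 f := by
    have h1 : ContDiff ℝ 2 (fun v : Fin d → ℝ => MvPolynomial.eval v p) :=
      (AnalyticOnNhd.eval_mvPolynomial (𝕜 := ℝ) p).contDiff
    exact h1.comp
      (PiLp.continuousLinearEquiv 2 ℝ fun _ : Fin d => ℝ).toContinuousLinearMap.contDiff
  -- the restriction of f to lines is a cubic polynomial
  set P : EuclideanSpace ℝ (Fin d) → Polynomial ℝ := fun v =>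
    MvPolynomial.aeval (fun i => Polynomial.C (x i) + Polynomial.C (v i) * Polynomial.X) p with hP
  have hPeval : ∀ (v : EuclideanSpace ℝ (Fin d)) (t : ℝ), (P v).eval t = f (x + t • v) := by
    intro v t
    have hc := MvPolynomial.comp_aeval
      (φ := Polynomial.aeval (R := ℝ) t)
      (f := fun i : Fin d => Polynomial.C (x i) + Polynomial.C (v i) * Polynomial.X)
    have hc' := congrArg (fun φ : MvPolynomial (Fin d) ℝ →ₐ[ℝ] ℝ => φ p) hc
    simp only [AlgHom.comp_apply] at hc'
    have hl : Polynomial.aeval (R := ℝ) t ((MvPolynomial.aeval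
        (fun i : Fin d => Polynomial.C (x i) + Polynomial.C (v i) * Polynomial.X)) p)
        = (P v).eval t := by
      rw [hP]; rw [← Polynomial.coe_aeval_eq_eval]
    rw [← hl, hc']
    have : (fun i : Fin d => Polynomial.aeval (R := ℝ) t
        (Polynomial.C (x i) + Polynomial.C (v i) * Polynomial.X))
        = fun i : Fin d => (x + t • v) i := by
      funext i
      simp [PiLp.add_apply, PiLp.smul_apply, smul_eq_mul]
      ring
    rw [this]
    rw [hf]
    rw [MvPolynomial.aeval_def, Algebra.algebraMap_self]
    rfl
  have hPdeg : ∀ v : EuclideanSpace ℝ (Fin d), (P v).natDegree ≤ 3 := by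
    intro v
    have hrw : P v = ∑ α ∈ p.support, MvPolynomial.aeval
        (fun i : Fin d => Polynomial.C (x i) + Polynomial.C (v i) * Polynomial.X)
        (MvPolynomial.monomial α (MvPolynomial.coeff α p)) := by
      rw [hP, ← map_sum, MvPolynomial.support_sum_monomial_coeff]
    rw [hrw]
    apply Polynomial.natDegree_sum_le_of_forall_le
    intro α hα
    rw [MvPolynomial.aeval_monomial]
    refine (Polynomial.natDegree_mul_le).trans ?_
    have h0 : (algebraMap ℝ (Polynomial ℝ) (MvPolynomial.coeff α p)).natDegree = 0 := by
      rw [Polynomial.algebraMap_eq]; exact Polynomial.natDegree_C _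
    rw [h0, zero_add]
    refine le_trans ?_ (le_trans (MvPolynomial.le_totalDegree hα) hp)
    rw [Finsupp.prod]
    refine (Polynomial.natDegree_prod_le _ _).trans ?_
    rw [Finsupp.sum]
    apply Finset.sum_le_sum
    intro i _
    refine (Polynomial.natDegree_pow_le).trans ?_
    have h1 : (Polynomial.C (x i) + Polynomial.C (v i) * Polynomial.X).natDegree ≤ 1 := by
      refine (Polynomial.natDegree_add_le _ _).trans ?_
      simp only [Polynomial.natDegree_C, max_le_iff]
      exact ⟨Nat.zero_le _, (Polynomial.natDegree_C_mul_le _ _).trans Polynomial.natDegree_X_le⟩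
    calc α i * (Polynomial.C (x i) + Polynomial.C (v i) * Polynomial.X).natDegree
        ≤ α i * 1 := Nat.mul_le_mul_left _ h1
      _ = α i := Nat.mul_one _
  -- key: second directional derivative equals twice the quadratic coefficient
  have hkey : ∀ v : EuclideanSpace ℝ (Fin d),
      (fderiv ℝ (fderiv ℝ f) x v) v = 2 * (P v).coeff 2 := by
    intro v
    have hline : ∀ t : ℝ, HasDerivAt (fun s : ℝ => x + s • v) v t := by
      intro t
      simpa using ((hasDerivAt_id t).smul_const v).const_add x
    have hg : ∀ t : ℝ, HasDerivAt (fun s => f (x + s • v)) (fderiv ℝ f (x + t • v) v) t := by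
      intro t
      exact ((hsmooth.differentiable (by norm_num)) _).hasFDerivAt.comp_hasDerivAt t (hline t)
    have hF1 : ContDiff ℝ 1 (fderiv ℝ f) := hsmooth.fderiv_right (by norm_num)
    have hG : HasDerivAt (fun t : ℝ => fderiv ℝ f (x + t • v)) (fderiv ℝ (fderiv ℝ f) x v) 0 := by
      have h := ((hF1.differentiable (by norm_num)) (x + (0:ℝ) • v)).hasFDerivAt.comp_hasDerivAt
        (0:ℝ) (hline 0)
      rw [zero_smul, add_zero] at h
      exact h
    have hG2 : HasDerivAt (fun t : ℝ => fderiv ℝ f (x + t • v) v)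
        ((fderiv ℝ (fderiv ℝ f) x v) v) 0 := by
      simpa using hG.clm_apply (hasDerivAt_const (0:ℝ) v)
    have hgP : (fun s : ℝ => f (x + s • v)) = fun s => (P v).eval s :=
      funext fun s => (hPeval v s).symm
    have hd1 : (fun t : ℝ => fderiv ℝ f (x + t • v) v)
        = fun t => ((P v).derivative).eval t := by
      funext t
      have e1 : fderiv ℝ f (x + t • v) v = deriv (fun s : ℝ => f (x + s • v)) t := (hg t).deriv.symm
      rw [e1, hgP]
      simp
    have hval : deriv (fun t : ℝ => ((P v).derivative).eval t) 0
        = (fderiv ℝ (fderiv ℝ f) x v) v := by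
      rw [← hd1]; exact hG2.deriv
    rw [← hval, Polynomial.deriv, ← Polynomial.coeff_zero_eq_eval_zero]
    simp [Polynomial.coeff_derivative]
    ring
  -- the quadratic (symmetrized second difference) identity
  have hquad : ∀ h : EuclideanSpace ℝ (Fin d),
      f (x + h) + f (x - h) - 2 * f x = (fderiv ℝ (fderiv ℝ f) x h) h := by
    intro h
    have e1 : f (x + h) = (P h).eval 1 := by
      rw [hPeval]; norm_num
    have e2 : f (x - h) = (P h).eval (-1) := by
      rw [hPeval]
      congr 1
      rw [neg_smul, one_smul, sub_eq_add_neg]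
    have e3 : f x = (P h).eval 0 := by
      rw [hPeval]; norm_num
    rw [e1, e2, e3, hkey h]
    rw [Polynomial.eval_eq_sum_range' (Nat.lt_succ_of_le (hPdeg h)) 1,
      Polynomial.eval_eq_sum_range' (Nat.lt_succ_of_le (hPdeg h)) (-1 : ℝ),
      Polynomial.eval_eq_sum_range' (Nat.lt_succ_of_le (hPdeg h)) (0 : ℝ)]
    simp [Finset.sum_range_succ]
    ring
  -- integrability helper
  have hInt : ∀ g : EuclideanSpace ℝ (Fin d) → ℝ, Continuous g →
      Integrable fun h : EuclideanSpace ℝ (Fin d) => g h * γ ‖h‖ := fun g hg =>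
    integrable_mul_gamma hγ_meas hγ_nonneg hγ_supp hγ_int hg
  have hcont_f : Continuous f := hsmooth.continuous
  -- translate the integral
  have step1 : ∫ y, (f y - f x) * γ ‖y - x‖
      = ∫ h : EuclideanSpace ℝ (Fin d), (f (x + h) - f x) * γ ‖h‖ := by
    rw [← integral_add_left_eq_self (μ := volume) (fun y => (f y - f x) * γ ‖y - x‖) x]
    simp only [add_sub_cancel_left]
  have step2 : (∫ h : EuclideanSpace ℝ (Fin d), (f (x + h) - f x) * γ ‖h‖)
      = ∫ h : EuclideanSpace ℝ (Fin d), (f (x - h) - f x) * γ ‖h‖ := by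
    rw [← integral_neg_eq_self (fun h : EuclideanSpace ℝ (Fin d) => (f (x + h) - f x) * γ ‖h‖)
      volume]
    simp only [norm_neg, ← sub_eq_add_neg]
  have i1 : Integrable (fun h : EuclideanSpace ℝ (Fin d) => (f (x + h) - f x) * γ ‖h‖) :=
    hInt _ ((hcont_f.comp (continuous_const.add continuous_id)).sub continuous_const)
  have i2 : Integrable (fun h : EuclideanSpace ℝ (Fin d) => (f (x - h) - f x) * γ ‖h‖) :=
    hInt _ ((hcont_f.comp (continuous_const.sub continuous_id)).sub continuous_const)
  set B := fderiv ℝ (fderiv ℝ f) x with hB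
  have step3 : 2 * ∫ h : EuclideanSpace ℝ (Fin d), (f (x + h) - f x) * γ ‖h‖
      = ∫ h : EuclideanSpace ℝ (Fin d), (B h h) * γ ‖h‖ := by
    have : 2 * ∫ h : EuclideanSpace ℝ (Fin d), (f (x + h) - f x) * γ ‖h‖
        = (∫ h : EuclideanSpace ℝ (Fin d), (f (x + h) - f x) * γ ‖h‖)
          + ∫ h : EuclideanSpace ℝ (Fin d), (f (x - h) - f x) * γ ‖h‖ := by
      rw [← step2]; ring
    rw [this, ← integral_add i1 i2]
    congr 1; funext h
    rw [← hquad h]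
    ring
  -- expand the quadratic form in coordinates
  have hrepr : ∀ h : EuclideanSpace ℝ (Fin d),
      h = ∑ i : Fin d, h i • EuclideanSpace.single i (1:ℝ) := by
    intro h
    have := (EuclideanSpace.basisFun (Fin d) ℝ).sum_repr h
    simp only [EuclideanSpace.basisFun_repr, EuclideanSpace.basisFun_apply] at this
    exact this.symm
  have hBexp : ∀ h : EuclideanSpace ℝ (Fin d),
      B h h = ∑ q : Fin d × Fin d, (h q.1 * h q.2) *
        (B (EuclideanSpace.single q.1 (1:ℝ)) (EuclideanSpace.single q.2 (1:ℝ))) := by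
    intro h
    conv_lhs => rw [hrepr h]
    simp only [map_sum, _root_.map_smul, ContinuousLinearMap.sum_apply,
      ContinuousLinearMap.smul_apply, smul_eq_mul]
    rw [Fintype.sum_prod_type, Finset.sum_comm]
    refine Finset.sum_congr rfl fun i _ => ?_
    rw [Finset.mul_sum]
    exact Finset.sum_congr rfl fun j _ => by ring
  have step4 : (∫ h : EuclideanSpace ℝ (Fin d), (B h h) * γ ‖h‖)
      = ∑ i : Fin d, B (EuclideanSpace.single i (1:ℝ)) (EuclideanSpace.single i (1:ℝ)) := by
    have hpt : ∀ h : EuclideanSpace ℝ (Fin d), (B h h) * γ ‖h‖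
        = ∑ q : Fin d × Fin d,
            (B (EuclideanSpace.single q.1 (1:ℝ)) (EuclideanSpace.single q.2 (1:ℝ)))
              * ((h q.1 * h q.2) * γ ‖h‖) := by
      intro h
      rw [hBexp h, Finset.sum_mul]
      refine Finset.sum_congr rfl fun q _ => ?_
      ring
    calc (∫ h : EuclideanSpace ℝ (Fin d), (B h h) * γ ‖h‖)
        = ∫ h : EuclideanSpace ℝ (Fin d), ∑ q : Fin d × Fin d,
            (B (EuclideanSpace.single q.1 (1:ℝ)) (EuclideanSpace.single q.2 (1:ℝ)))
              * ((h q.1 * h q.2) * γ ‖h‖) := by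
          congr 1; funext h; exact hpt h
      _ = ∑ q : Fin d × Fin d,
            ∫ h : EuclideanSpace ℝ (Fin d),
              (B (EuclideanSpace.single q.1 (1:ℝ)) (EuclideanSpace.single q.2 (1:ℝ)))
                * ((h q.1 * h q.2) * γ ‖h‖) := by
          apply integral_finset_sum
          intro q _
          exact (hInt _ ((cont_coord q.1).mul (cont_coord q.2))).const_mul _
      _ = ∑ q : Fin d × Fin d,
            (B (EuclideanSpace.single q.1 (1:ℝ)) (EuclideanSpace.single q.2 (1:ℝ)))
              * if q.1 = q.2 then 1 else 0 := by
          refine Finset.sum_congr rfl fun q _ => ?_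
          rw [integral_const_mul,
            moment hd hγ_meas hγ_nonneg hγ_supp hγ_int hγ_norm q.1 q.2]
      _ = ∑ i : Fin d, B (EuclideanSpace.single i (1:ℝ)) (EuclideanSpace.single i (1:ℝ)) := by
          rw [Fintype.sum_prod_type]
          refine Finset.sum_congr rfl fun i _ => ?_
          simp
  -- conclude
  rw [step1, step3, step4]
  refine Finset.sum_congr rfl fun i _ => ?_
  rw [iteratedFDeriv_two_apply]
  simp [hB]
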